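/- Let δ ∈ (0, 1), let X be a nonempty finite set, and let (Ω, ℙ) be a probability space. For each integer t ≥ 1 and each x ∈ X let Z_{t,x} : Ω → ℝ be a random variable whose law is gaussianReal (μ t x) ((s t x)²), where μ t x ∈ ℝ and s t x ≥ 0. Set β_t = 2·log(π²·t²·|X|/(3δ)). Then ℙ( for every integer t ≥ 1 and every x ∈ X, |Z_{t,x} − μ t x| ≤ β_t · s t x ) ≥ 1 − δ/2. (The mathematical core of Lemma 1: uniform Gaussian concentration over all iterations and all points of the finite domain via a union bound, with failure probability at most δ/2; no independence is required.) -/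

import Mathlib

open MeasureTheory ProbabilityTheory Real

open Filter
lemma aux_hasDerivAt (x : ℝ) :
    HasDerivAt (fun y : ℝ => -rexp (-y ^ 2 / 2)) (x * rexp (-x ^ 2 / 2)) x := by
  have h0 : HasDerivAt (fun y : ℝ => y ^ 2) (2 * x) x := by
    simpa using hasDerivAt_pow 2 x
  have h1 : HasDerivAt (fun y : ℝ => -y ^ 2 / 2) (-(2 * x) / 2) x := h0.neg.div_const 2
  have h2 := h1.exp
  have h3 := h2.neg
  exact h3.congr_deriv (by ring)

lemma integral_Ioi_id_mul_gauss (c : ℝ) :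
    ∫ x in Set.Ioi c, x * rexp (-x ^ 2 / 2) = rexp (-c ^ 2 / 2) := by
  have hint : IntegrableOn (fun x : ℝ => x * rexp (-x ^ 2 / 2)) (Set.Ioi c) := by
    have h := integrable_mul_exp_neg_mul_sq (b := 1 / 2) one_half_pos
    have heq : (fun x : ℝ => x * rexp (-x ^ 2 / 2)) = fun x => x * rexp (-(1 / 2) * x ^ 2) := by
      funext x; ring_nf
    rw [heq]; exact h.integrableOn
  have htend : Tendsto (fun y : ℝ => -rexp (-y ^ 2 / 2)) atTop (nhds 0) := by
    have h1 : Tendsto (fun y : ℝ => -y ^ 2 / 2) atTop atBot := by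
      have : Tendsto (fun y : ℝ => y ^ 2) atTop atTop := tendsto_pow_atTop two_ne_zero
      exact (tendsto_neg_atTop_atBot.comp this).atBot_div_const two_pos
    have := (tendsto_exp_atBot.comp h1).neg
    simpa using this
  have := integral_Ioi_of_hasDerivAt_of_tendsto
    (f := fun y : ℝ => -rexp (-y ^ 2 / 2)) (f' := fun x => x * rexp (-x ^ 2 / 2)) (a := c)
    (m := 0) (Continuous.continuousWithinAt (by fun_prop)) (fun x _ => aux_hasDerivAt x)
    hint htend
  simpa using this

lemma std_gauss_tail {c : ℝ} (hc : 1 ≤ c) :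
    gaussianReal 0 1 {y | c < |y|} ≤ ENNReal.ofReal (rexp (-c ^ 2 / 2)) := by
  have hc0 : (0 : ℝ) < c := lt_of_lt_of_le one_pos hc
  rw [gaussianReal_apply_eq_integral 0 one_ne_zero]
  apply ENNReal.ofReal_le_ofReal
  have hpdf : ∀ x : ℝ, gaussianPDFReal 0 1 x = (Real.sqrt (2 * π))⁻¹ * rexp (-x ^ 2 / 2) := by
    intro x; simp [gaussianPDFReal]
  have hset : {y : ℝ | c < |y|} = Set.Iio (-c) ∪ Set.Ioi c := by
    ext y
    simp only [Set.mem_setOf_eq, Set.mem_union, Set.mem_Iio, Set.mem_Ioi, lt_abs]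
    rw [lt_neg]
    exact or_comm
  have hii : ∀ S : Set ℝ, IntegrableOn (gaussianPDFReal 0 1) S :=
    fun S => (integrable_gaussianPDFReal 0 1).integrableOn
  have hdisj : Disjoint (Set.Iio (-c)) (Set.Ioi c) := by
    apply Set.disjoint_left.mpr
    intro y hy1 hy2
    simp only [Set.mem_Iio, Set.mem_Ioi] at hy1 hy2
    linarith
  rw [hset, setIntegral_union hdisj measurableSet_Ioi (hii _) (hii _)]
  have hneg : ∫ x in Set.Iio (-c), gaussianPDFReal 0 1 x
      = ∫ x in Set.Ioi c, gaussianPDFReal 0 1 x := by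
    rw [setIntegral_congr_set Iio_ae_eq_Iic, ← integral_comp_neg_Ioi]
    refine setIntegral_congr_fun measurableSet_Ioi fun x _ => ?_
    simp [gaussianPDFReal]
  have hintg : IntegrableOn (fun x : ℝ => (Real.sqrt (2 * π))⁻¹ * (x * rexp (-x ^ 2 / 2)))
      (Set.Ioi c) := by
    have h := integrable_mul_exp_neg_mul_sq (b := 1 / 2) one_half_pos
    have heq : (fun x : ℝ => x * rexp (-x ^ 2 / 2)) = fun x => x * rexp (-(1 / 2) * x ^ 2) := by
      funext x; ring_nf
    exact (heq ▸ h.integrableOn).const_mul _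
  have hC : (0:ℝ) ≤ (Real.sqrt (2 * π))⁻¹ := by positivity
  have hbound : ∫ x in Set.Ioi c, gaussianPDFReal 0 1 x
      ≤ (Real.sqrt (2 * π))⁻¹ * rexp (-c ^ 2 / 2) := by
    have h1 : ∫ x in Set.Ioi c, gaussianPDFReal 0 1 x
        ≤ ∫ x in Set.Ioi c, (Real.sqrt (2 * π))⁻¹ * (x * rexp (-x ^ 2 / 2)) := by
      refine setIntegral_mono_on (hii _) hintg measurableSet_Ioi fun x hx => ?_
      rw [hpdf x]
      have hx1 : (1 : ℝ) ≤ x := hc.trans (le_of_lt hx)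
      have : rexp (-x ^ 2 / 2) ≤ x * rexp (-x ^ 2 / 2) := by
        nlinarith [exp_pos (-x ^ 2 / 2)]
      exact mul_le_mul_of_nonneg_left this hC
    rw [integral_const_mul, integral_Ioi_id_mul_gauss] at h1
    exact h1
  have hsqrt : (2 : ℝ) ≤ Real.sqrt (2 * π) := by
    have h4 : (4 : ℝ) ≤ 2 * π := by nlinarith [pi_gt_three]
    have := Real.sqrt_le_sqrt h4
    rwa [show (4:ℝ) = 2 ^ 2 by norm_num, Real.sqrt_sq (by norm_num : (0:ℝ) ≤ 2)] at this
  have hC2 : 2 * (Real.sqrt (2 * π))⁻¹ ≤ 1 := by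
    rw [mul_inv_le_iff₀ (by positivity)]
    linarith
  calc (∫ x in Set.Iio (-c), gaussianPDFReal 0 1 x) + ∫ x in Set.Ioi c, gaussianPDFReal 0 1 x
      = 2 * ∫ x in Set.Ioi c, gaussianPDFReal 0 1 x := by rw [hneg]; ring
    _ ≤ 2 * ((Real.sqrt (2 * π))⁻¹ * rexp (-c ^ 2 / 2)) := by
        apply mul_le_mul_of_nonneg_left hbound (by norm_num)
    _ ≤ 1 * rexp (-c ^ 2 / 2) := by
        rw [← mul_assoc]
        exact mul_le_mul_of_nonneg_right hC2 (exp_pos _).le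
    _ = rexp (-c ^ 2 / 2) := one_mul _

lemma gauss_tail (m : ℝ) {σ : ℝ} (hσ : 0 ≤ σ) {c : ℝ} (hc : 1 ≤ c) :
    gaussianReal m ⟨σ ^ 2, sq_nonneg σ⟩ {y | c * σ < |y - m|}
      ≤ ENNReal.ofReal (rexp (-c ^ 2 / 2)) := by
  rcases eq_or_lt_of_le hσ with h0 | h0
  · have hv : gaussianReal m ⟨σ ^ 2, sq_nonneg σ⟩ = gaussianReal m 0 := by
      congr 1; ext; simp [← h0]; rfl
    rw [hv, gaussianReal_zero_var, Measure.dirac_apply]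
    have : m ∉ {y : ℝ | c * σ < |y - m|} := by simp [← h0]
    rw [Set.indicator_of_notMem this]
    exact bot_le
  · have h1 : Measure.map (fun y : ℝ => σ * y) (gaussianReal 0 1)
        = gaussianReal 0 ⟨σ ^ 2, sq_nonneg σ⟩ := by
      rw [show (fun y : ℝ => σ * y) = (σ * ·) from rfl, gaussianReal_map_const_mul]
      congr 1
      · ring
      · ext : 1; simp; rfl
    have hmap : gaussianReal m ⟨σ ^ 2, sq_nonneg σ⟩
        = Measure.map (fun y : ℝ => σ * y + m) (gaussianReal 0 1) := by
      have h2 := gaussianReal_map_add_const (μ := 0) (v := ⟨σ ^ 2, sq_nonneg σ⟩) m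
      rw [← h1, Measure.map_map (by fun_prop) (by fun_prop)] at h2
      simp only [zero_add] at h2
      rw [← h2]
      rfl
    have hB : MeasurableSet {y : ℝ | c * σ < |y - m|} := by
      have hcont : Continuous fun y : ℝ => |y - m| := by fun_prop
      exact measurableSet_lt measurable_const hcont.measurable
    rw [hmap, Measure.map_apply (by fun_prop) hB]
    have hpre : (fun y : ℝ => σ * y + m) ⁻¹' {y | c * σ < |y - m|} = {y | c < |y|} := by
      ext y
      simp only [Set.mem_preimage, Set.mem_setOf_eq, add_sub_cancel_right, abs_mul,
        abs_of_pos h0]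
      rw [mul_comm c σ]
      exact mul_lt_mul_iff_right₀ h0
    rw [hpre]
    exact std_gauss_tail hc

/-- Mathematical core of Lemma 1: uniform Gaussian concentration over all iterations
`t ≥ 1` and all points of the finite domain `X` via a union bound, with failure
probability at most `δ/2`, where `β_t = 2·log(π²·t²·|X|/(3δ))`.
No independence is required. -/
theorem gaussian_uniform_concentration_all_iterations
    (δ : ℝ) (hδ : δ ∈ Set.Ioo (0 : ℝ) 1)
    {X : Type*} [Fintype X] [Nonempty X]
    {Ω : Type*} [MeasureSpace Ω] [IsProbabilityMeasure (ℙ : Measure Ω)]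
    (Z : ℕ → X → Ω → ℝ) (μ : ℕ → X → ℝ) (s : ℕ → X → ℝ)
    (hs : ∀ t x, 0 ≤ s t x)
    (hZ : ∀ t : ℕ, 1 ≤ t → ∀ x : X,
      Measure.map (Z t x) ℙ = gaussianReal (μ t x) ⟨(s t x) ^ 2, sq_nonneg _⟩) :
    1 - ENNReal.ofReal (δ / 2) ≤
      ℙ {ω : Ω | ∀ t : ℕ, 1 ≤ t → ∀ x : X,
          |Z t x ω - μ t x| ≤
            2 * Real.log (π ^ 2 * (t : ℝ) ^ 2 * (Fintype.card X : ℝ) / (3 * δ)) * s t x} := by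
  obtain ⟨hδ0, hδ1⟩ := hδ
  have hn1 : (1 : ℝ) ≤ (Fintype.card X : ℝ) := by exact_mod_cast Fintype.card_pos
  set n : ℝ := (Fintype.card X : ℝ) with hn
  have hn0 : n ≠ 0 := by positivity
  set β : ℕ → ℝ := fun t => 2 * Real.log (π ^ 2 * (t : ℝ) ^ 2 * n / (3 * δ)) with hβ
  set G : Set Ω := {ω : Ω | ∀ t : ℕ, 1 ≤ t → ∀ x : X,
      |Z t x ω - μ t x| ≤ β t * s t x} with hG
  -- arithmetic facts
  have hA : ∀ t : ℕ, 1 ≤ t → (3 : ℝ) ≤ π ^ 2 * (t : ℝ) ^ 2 * n / (3 * δ) := by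
    intro t ht
    have ht1 : (1 : ℝ) ≤ (t : ℝ) := by exact_mod_cast ht
    have hπ2 : (9 : ℝ) ≤ π ^ 2 := by nlinarith [pi_gt_three]
    have ht2 : (1 : ℝ) ≤ (t : ℝ) ^ 2 := by nlinarith
    have hfac : (9 : ℝ) * 1 * 1 ≤ π ^ 2 * (t : ℝ) ^ 2 * n := by
      gcongr <;> linarith
    rw [le_div_iff₀ (by positivity)]
    nlinarith
  have hlog : ∀ t : ℕ, 1 ≤ t → 1 ≤ Real.log (π ^ 2 * (t : ℝ) ^ 2 * n / (3 * δ)) := by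
    intro t ht
    rw [Real.le_log_iff_exp_le (by linarith [hA t ht])]
    calc rexp 1 ≤ 3 := by linarith [Real.exp_one_lt_d9.le]
      _ ≤ _ := hA t ht
  have hβ1 : ∀ t : ℕ, 1 ≤ t → 1 ≤ β t := fun t ht => by
    have := hlog t ht; simp only [hβ]; linarith
  have hexp : ∀ t : ℕ, 1 ≤ t →
      rexp (-(β t) ^ 2 / 2) ≤ 3 * δ / (π ^ 2 * (t : ℝ) ^ 2 * n) := by
    intro t ht
    have hApos : (0 : ℝ) < π ^ 2 * (t : ℝ) ^ 2 * n / (3 * δ) := by linarith [hA t ht]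
    have hL := hlog t ht
    have h1 : rexp (-(β t) ^ 2 / 2)
        ≤ rexp (-Real.log (π ^ 2 * (t : ℝ) ^ 2 * n / (3 * δ))) := by
      apply Real.exp_le_exp.mpr
      simp only [hβ]
      nlinarith
    rw [Real.exp_neg, Real.exp_log hApos, inv_div] at h1
    exact h1
  -- per (t, x) bad-event bound
  have hbad : ∀ t : ℕ, 1 ≤ t → ∀ x : X,
      ℙ (Z t x ⁻¹' {y | β t * s t x < |y - μ t x|})
        ≤ ENNReal.ofReal (3 * δ / (π ^ 2 * (t : ℝ) ^ 2 * n)) := by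
    intro t ht x
    have hZm : AEMeasurable (Z t x) ℙ :=
      aemeasurable_of_map_neZero (by rw [hZ t ht x]; exact @IsProbabilityMeasure.neZero _ _ _ (instIsProbabilityMeasureGaussianReal _ _))
    have hB : MeasurableSet {y : ℝ | β t * s t x < |y - μ t x|} := by
      have hcont : Continuous fun y : ℝ => |y - μ t x| := by fun_prop
      exact measurableSet_lt measurable_const hcont.measurable
    rw [← Measure.map_apply_of_aemeasurable hZm hB, hZ t ht x]
    exact le_trans (gauss_tail _ (hs t x) (hβ1 t ht))
      (ENNReal.ofReal_le_ofReal (hexp t ht))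
  -- union bound over x for each t
  have hr0 : ∀ t : ℕ, 0 ≤ 3 * δ / π ^ 2 * (1 / (t : ℝ) ^ 2) := fun t => by positivity
  have hbadt : ∀ t : ℕ,
      ℙ (⋃ x : X, {ω : Ω | 1 ≤ t ∧ β t * s t x < |Z t x ω - μ t x|})
        ≤ ENNReal.ofReal (3 * δ / π ^ 2 * (1 / (t : ℝ) ^ 2)) := by
    intro t
    by_cases ht : 1 ≤ t
    · have ht0 : (t : ℝ) ≠ 0 := by
        exact_mod_cast Nat.one_le_iff_ne_zero.mp ht
      calc ℙ (⋃ x : X, {ω : Ω | 1 ≤ t ∧ β t * s t x < |Z t x ω - μ t x|})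
          ≤ ∑' x : X, ℙ {ω : Ω | 1 ≤ t ∧ β t * s t x < |Z t x ω - μ t x|} :=
            measure_iUnion_le _
        _ ≤ ∑' x : X, ENNReal.ofReal (3 * δ / (π ^ 2 * (t : ℝ) ^ 2 * n)) := by
            refine ENNReal.tsum_le_tsum fun x => ?_
            have hSet : {ω : Ω | 1 ≤ t ∧ β t * s t x < |Z t x ω - μ t x|}
                = Z t x ⁻¹' {y | β t * s t x < |y - μ t x|} := by
              ext ω; simp [ht]
            rw [hSet]
            exact hbad t ht x
        _ = (Fintype.card X) • ENNReal.ofReal (3 * δ / (π ^ 2 * (t : ℝ) ^ 2 * n)) := by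
            rw [tsum_fintype]
            simp [Finset.sum_const]
        _ = ENNReal.ofReal (3 * δ / π ^ 2 * (1 / (t : ℝ) ^ 2)) := by
            rw [nsmul_eq_mul, ← ENNReal.ofReal_natCast (Fintype.card X),
              ← ENNReal.ofReal_mul (by positivity)]
            congr 1
            rw [← hn]
            field_simp
    · have hempty : (⋃ x : X, {ω : Ω | 1 ≤ t ∧ β t * s t x < |Z t x ω - μ t x|})
          = (∅ : Set Ω) := by
        simp [Set.eq_empty_iff_forall_notMem, ht]
      rw [hempty]
      simp
  -- total failure probability
  have hsum : ∑' t : ℕ, ENNReal.ofReal (3 * δ / π ^ 2 * (1 / (t : ℝ) ^ 2))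
      = ENNReal.ofReal (δ / 2) := by
    have hHS : HasSum (fun t : ℕ => 3 * δ / π ^ 2 * (1 / (t : ℝ) ^ 2))
        (3 * δ / π ^ 2 * (π ^ 2 / 6)) := hasSum_zeta_two.mul_left _
    rw [← ENNReal.ofReal_tsum_of_nonneg hr0 hHS.summable, hHS.tsum_eq]
    congr 1
    have hπ : π ≠ 0 := pi_ne_zero
    field_simp
    ring
  have hGc : ℙ Gᶜ ≤ ENNReal.ofReal (δ / 2) := by
    have hsub : Gᶜ ⊆ ⋃ t : ℕ, ⋃ x : X,
        {ω : Ω | 1 ≤ t ∧ β t * s t x < |Z t x ω - μ t x|} := by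
      intro ω hω
      simp only [hG, Set.mem_compl_iff, Set.mem_setOf_eq] at hω
      push_neg at hω
      obtain ⟨t, ht, x, hx⟩ := hω
      exact Set.mem_iUnion.mpr ⟨t, Set.mem_iUnion.mpr ⟨x, ⟨ht, hx⟩⟩⟩
    calc ℙ (Gᶜ) ≤ ℙ (⋃ t : ℕ, ⋃ x : X,
          {ω : Ω | 1 ≤ t ∧ β t * s t x < |Z t x ω - μ t x|}) := measure_mono hsub
      _ ≤ ∑' t : ℕ, ℙ (⋃ x : X, {ω : Ω | 1 ≤ t ∧ β t * s t x < |Z t x ω - μ t x|}) :=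
          measure_iUnion_le _
      _ ≤ ∑' t : ℕ, ENNReal.ofReal (3 * δ / π ^ 2 * (1 / (t : ℝ) ^ 2)) :=
          ENNReal.tsum_le_tsum hbadt
      _ = ENNReal.ofReal (δ / 2) := hsum
  rw [tsub_le_iff_right]
  calc (1 : ENNReal) = ℙ (G ∪ Gᶜ) := by rw [Set.union_compl_self]; exact measure_univ.symm
    _ ≤ ℙ G + ℙ Gᶜ := measure_union_le _ _
    _ ≤ ℙ G + ENNReal.ofReal (δ / 2) := add_le_add_right hGc _
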